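/- Let G be a finite simple connected graph with at least one edge and let k be a positive integer. If G induces a k-periodic Grover walk, then the subdivision graph S(G) induces a 2k-periodic Grover walk. -/

import Mathlib

set_option linter.unusedSectionVars false
set_option linter.unusedVariables false


open Matrix SimpleGraph

/-- The Grover transfer matrix `U = U(G)` of a finite simple graph `G`, a `2m × 2m`
complex matrix indexed by the darts (symmetric arcs) of `G`.  For darts `e, f`,
`U e f = 2/deg(t(f)) - 1` if `f = e⁻¹`, `U e f = 2/deg(t(f))` if `t(f) = o(e)` and
`f ≠ e⁻¹`, and `U e f = 0` otherwise. -/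
noncomputable def groverMatrix {V : Type*} [Fintype V] [DecidableEq V]
    (G : SimpleGraph V) [DecidableRel G.Adj] : Matrix G.Dart G.Dart ℂ :=
  fun e f =>
    if f = e.symm then 2 / (G.degree f.snd : ℂ) - 1
    else if f.snd = e.fst then 2 / (G.degree f.snd : ℂ)
    else 0

/-- `G` induces a `k`-periodic Grover walk: `U ^ k = 1` and `U ^ j ≠ 1` for `1 ≤ j < k`. -/
def InducesPeriodicGroverWalk {V : Type*} [Fintype V] [DecidableEq V]
    (G : SimpleGraph V) [DecidableRel G.Adj] (k : ℕ) : Prop :=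
  groverMatrix G ^ k = 1 ∧ ∀ j : ℕ, 1 ≤ j → j < k → groverMatrix G ^ j ≠ 1

/-- The transition matrix of the isotropic random walk on `G`:
`T u v = 1/deg(u)` if `u ∼ v` and `0` otherwise. -/
noncomputable def transitionMatrix {V : Type*} [Fintype V]
    (G : SimpleGraph V) [DecidableRel G.Adj] : Matrix V V ℝ :=
  fun u v => if G.Adj u v then 1 / (G.degree u : ℝ) else 0

/-- The subdivision graph `S(G)` of `G`, on vertex set `V ⊔ E(G)`:
a vertex `v : V` is adjacent to an edge-vertex `e : E(G)` exactly when `v` is an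
endpoint of `e`, and there are no other adjacencies. -/
def subdivisionGraph {V : Type*} (G : SimpleGraph V) :
    SimpleGraph (V ⊕ G.edgeSet) where
  Adj a b :=
    match a, b with
    | Sum.inl v, Sum.inr e => v ∈ (e : Sym2 V)
    | Sum.inr e, Sum.inl v => v ∈ (e : Sym2 V)
    | _, _ => False
  symm := ⟨by rintro (v | e) (w | f) h <;> exact h⟩
  loopless := ⟨by rintro (v | e) h <;> exact h⟩

instance subdivisionGraph.adjDecidable {V : Type*} [DecidableEq V] (G : SimpleGraph V) :
    DecidableRel (subdivisionGraph G).Adj := fun a b =>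
  match a, b with
  | Sum.inl v, Sum.inr e => inferInstanceAs (Decidable (v ∈ (e : Sym2 V)))
  | Sum.inr e, Sum.inl v => inferInstanceAs (Decidable (v ∈ (e : Sym2 V)))
  | Sum.inl _, Sum.inl _ => inferInstanceAs (Decidable False)
  | Sum.inr _, Sum.inr _ => inferInstanceAs (Decidable False)

namespace SubdivisionAux

variable {V : Type*} [DecidableEq V] {G : SimpleGraph V}

@[simp] lemma sub_adj_inl_inr (v : V) (e : G.edgeSet) :
    (subdivisionGraph G).Adj (Sum.inl v) (Sum.inr e) ↔ v ∈ (e : Sym2 V) := Iff.rfl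
@[simp] lemma sub_adj_inr_inl (e : G.edgeSet) (v : V) :
    (subdivisionGraph G).Adj (Sum.inr e) (Sum.inl v) ↔ v ∈ (e : Sym2 V) := Iff.rfl
@[simp] lemma sub_adj_inl_inl (v w : V) :
    ¬ (subdivisionGraph G).Adj (Sum.inl v) (Sum.inl w) := fun h => h
@[simp] lemma sub_adj_inr_inr (e f : G.edgeSet) :
    ¬ (subdivisionGraph G).Adj (Sum.inr e) (Sum.inr f) := fun h => h

/-- the dart `e → t(d)` of the subdivision graph. -/
def dartA (d : G.Dart) : (subdivisionGraph G).Dart :=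
  ⟨(Sum.inr ⟨d.edge, d.edge_mem⟩, Sum.inl d.snd), Sym2.mem_mk_right _ _⟩

/-- the dart `o(d) → e` of the subdivision graph. -/
def dartB (d : G.Dart) : (subdivisionGraph G).Dart :=
  ⟨(Sum.inl d.fst, Sum.inr ⟨d.edge, d.edge_mem⟩), Sym2.mem_mk_left _ _⟩

def subInv (a : (subdivisionGraph G).Dart) : G.Dart ⊕ G.Dart :=
  match a with
  | ⟨(Sum.inr e, Sum.inl v), h⟩ =>
      Sum.inl ⟨(Sym2.Mem.other' (show v ∈ (e : Sym2 V) from h), v),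
        (G.mem_edgeSet.mp (by rw [Sym2.other_spec' (show v ∈ (e : Sym2 V) from h)]; exact e.2)).symm⟩
  | ⟨(Sum.inl v, Sum.inr e), h⟩ =>
      Sum.inr ⟨(v, Sym2.Mem.other' (show v ∈ (e : Sym2 V) from h)),
        G.mem_edgeSet.mp (by rw [Sym2.other_spec' (show v ∈ (e : Sym2 V) from h)]; exact e.2)⟩
  | ⟨(Sum.inl _, Sum.inl _), h⟩ => absurd h (sub_adj_inl_inl _ _)
  | ⟨(Sum.inr _, Sum.inr _), h⟩ => absurd h (sub_adj_inr_inr _ _)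

lemma other'_of_snd {d : G.Dart}
    (h : d.snd ∈ ((⟨d.edge, d.edge_mem⟩ : G.edgeSet) : Sym2 V)) :
    Sym2.Mem.other' h = d.fst := by
  have hs : s(d.snd, Sym2.Mem.other' h) = s(d.fst, d.snd) := Sym2.other_spec' h
  rcases Sym2.eq_iff.mp hs with ⟨h1, _⟩ | ⟨_, h2⟩
  · exact absurd h1 d.snd_ne_fst
  · exact h2

lemma other'_of_fst {d : G.Dart}
    (h : d.fst ∈ ((⟨d.edge, d.edge_mem⟩ : G.edgeSet) : Sym2 V)) :
    Sym2.Mem.other' h = d.snd := by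
  have hs : s(d.fst, Sym2.Mem.other' h) = s(d.fst, d.snd) := Sym2.other_spec' h
  rcases Sym2.eq_iff.mp hs with ⟨_, h2⟩ | ⟨h1, _⟩
  · exact h2
  · exact absurd h1 d.fst_ne_snd

lemma other'_swap {x : V} {z : Sym2 V} (h : x ∈ z) :
    s(Sym2.Mem.other' h, x) = z := by
  rw [Sym2.eq_swap]; exact Sym2.other_spec' h

def subDartEquiv : G.Dart ⊕ G.Dart ≃ (subdivisionGraph G).Dart where
  toFun := Sum.elim dartA dartB
  invFun := subInv
  left_inv := by
    rintro (d | d)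
    · apply congrArg Sum.inl
      refine Dart.ext _ _ (Prod.ext ?_ rfl)
      exact other'_of_snd (d := d) (Sym2.mem_mk_right _ _)
    · apply congrArg Sum.inr
      refine Dart.ext _ _ (Prod.ext rfl ?_)
      exact other'_of_fst (d := d) (Sym2.mem_mk_left _ _)
  right_inv := by
    rintro ⟨⟨(v | e), (w | f)⟩, h⟩
    · exact absurd h (sub_adj_inl_inl _ _)
    · exact Dart.ext _ _ (Prod.ext rfl
        (congrArg Sum.inr (Subtype.ext (Sym2.other_spec' _))))
    · exact Dart.ext _ _ (Prod.ext (congrArg Sum.inr (Subtype.ext (other'_swap _))) rfl)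
    · exact absurd h (sub_adj_inr_inr _ _)

variable [Fintype V] [DecidableRel G.Adj]

def nbhdEquiv (v : V) :
    ((subdivisionGraph G).neighborSet (Sum.inl v)) ≃ (G.incidenceSet v) where
  toFun x :=
    match x with
    | ⟨Sum.inr e, h⟩ => ⟨(e : Sym2 V), e.2, h⟩
    | ⟨Sum.inl w, h⟩ =>
        absurd (show (subdivisionGraph G).Adj (Sum.inl v) (Sum.inl w) from h)
          (sub_adj_inl_inl _ _)
  invFun e := ⟨Sum.inr ⟨e.1, e.2.1⟩, e.2.2⟩
  left_inv := by
    rintro ⟨(w | e), h⟩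
    · exact absurd (show (subdivisionGraph G).Adj (Sum.inl v) (Sum.inl w) from h)
        (sub_adj_inl_inl _ _)
    · rfl
  right_inv e := rfl

lemma degree_inl (v : V) : (subdivisionGraph G).degree (Sum.inl v) = G.degree v := by
  have h1 : G.degree v = Fintype.card (G.incidenceSet v) :=
    (card_incidenceSet_eq_degree G v).symm
  have h2 : (subdivisionGraph G).degree (Sum.inl v) =
      Fintype.card ((subdivisionGraph G).neighborSet (Sum.inl v)) :=
    (card_neighborSet_eq_degree _ _).symm
  rw [h1, h2]
  exact Fintype.card_congr (nbhdEquiv v)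

lemma degree_inr (e : G.edgeSet) : (subdivisionGraph G).degree (Sum.inr e) = 2 := by
  obtain ⟨e, he⟩ := e
  revert he
  refine Sym2.ind (fun x y he => ?_) e
  have hxy : G.Adj x y := G.mem_edgeSet.mp he
  have hnf : (subdivisionGraph G).neighborFinset (Sum.inr ⟨s(x, y), he⟩) =
      {Sum.inl x, Sum.inl y} := by
    ext z
    cases z with
    | inl w => simp [mem_neighborFinset, Sym2.mem_iff]
    | inr f => simp [mem_neighborFinset]
  rw [← card_neighborFinset_eq_degree, hnf,
    Finset.card_insert_of_notMem (by simp [hxy.ne]), Finset.card_singleton]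

end SubdivisionAux

namespace SubdivisionAux

variable {V : Type*} [Fintype V] [DecidableEq V] {G : SimpleGraph V} [DecidableRel G.Adj]

lemma dart_symm_iff₁ {d d' : G.Dart} :
    (d'.fst = d.snd ∧ d'.edge = d.edge) ↔ d' = d.symm := by
  constructor
  · rintro ⟨h1, h2⟩
    rcases (dart_edge_eq_iff d' d).mp h2 with rfl | h
    · exact absurd h1 d'.fst_ne_snd
    · exact h
  · rintro rfl
    exact ⟨rfl, d.edge_symm⟩

lemma dart_symm_iff₂ {d d' : G.Dart} :
    (d'.edge = d.edge ∧ d'.snd = d.fst) ↔ d' = d.symm := by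
  constructor
  · rintro ⟨h2, h1⟩
    rcases (dart_edge_eq_iff d' d).mp h2 with rfl | h
    · exact absurd h1 d'.snd_ne_fst
    · exact h
  · rintro rfl
    exact ⟨d.edge_symm, rfl⟩

lemma entryAA (d d' : G.Dart) :
    groverMatrix (subdivisionGraph G) (dartA d) (dartA d') = 0 := by
  have h1 : dartA d' ≠ (dartA d).symm := by
    simp [dartA, Dart.ext_iff, Prod.ext_iff]
  have h2 : (dartA d').snd ≠ (dartA d).fst := by simp [dartA]
  simp [groverMatrix, h1, h2]

lemma entryBB (d d' : G.Dart) :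
    groverMatrix (subdivisionGraph G) (dartB d) (dartB d') = 0 := by
  have h1 : dartB d' ≠ (dartB d).symm := by
    simp [dartB, Dart.ext_iff, Prod.ext_iff]
  have h2 : (dartB d').snd ≠ (dartB d).fst := by simp [dartB]
  simp [groverMatrix, h1, h2]

lemma entryAB (d d' : G.Dart) :
    groverMatrix (subdivisionGraph G) (dartA d) (dartB d') =
      if d' = d then 1 else 0 := by
  have hsym : (dartB d' = (dartA d).symm) ↔ d' = d.symm := by
    constructor
    · intro hc
      rw [Dart.ext_iff] at hc
      simp only [dartA, dartB, Dart.symm_toProd, Prod.swap_prod_mk, Prod.mk.injEq,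
        Sum.inl.injEq, Sum.inr.injEq, Subtype.mk.injEq] at hc
      exact dart_symm_iff₁.mp hc
    · rintro rfl
      rw [Dart.ext_iff]
      simp [dartA, dartB]
  have hsnd : ((dartB d').snd = (dartA d).fst) ↔ (d'.edge = d.edge) := by
    simp [dartA, dartB, Subtype.ext_iff]
  by_cases h1 : d' = d.symm
  · have hd : d' ≠ d := by rw [h1]; exact d.symm_ne
    simp only [groverMatrix]
    rw [if_pos (hsym.mpr h1), if_neg hd,
      show ((dartB d').snd) = Sum.inr (⟨d'.edge, d'.edge_mem⟩ : G.edgeSet) from rfl,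
      degree_inr]
    norm_num
  · by_cases h2 : d' = d
    · subst h2
      simp only [groverMatrix]
      rw [if_neg (fun hc => h1 (hsym.mp hc)), if_pos (hsnd.mpr rfl),
        show ((dartB d').snd) = Sum.inr (⟨d'.edge, d'.edge_mem⟩ : G.edgeSet) from rfl,
        degree_inr]
      norm_num
    · have hne2 : ¬ ((dartB d').snd = (dartA d).fst) := by
        rw [hsnd]
        intro hc
        rcases (dart_edge_eq_iff d' d).mp hc with h | h
        · exact h2 h
        · exact h1 h
      simp only [groverMatrix]
      rw [if_neg (fun hc => h1 (hsym.mp hc)), if_neg hne2, if_neg h2]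

lemma entryBA (d d' : G.Dart) :
    groverMatrix (subdivisionGraph G) (dartB d) (dartA d') = groverMatrix G d d' := by
  have hsym : (dartA d' = (dartB d).symm) ↔ d' = d.symm := by
    constructor
    · intro hc
      rw [Dart.ext_iff] at hc
      simp only [dartA, dartB, Dart.symm_toProd, Prod.swap_prod_mk, Prod.mk.injEq,
        Sum.inl.injEq, Sum.inr.injEq, Subtype.mk.injEq] at hc
      exact dart_symm_iff₂.mp hc
    · rintro rfl
      rw [Dart.ext_iff]
      simp [dartA, dartB]
  have hsnd : ((dartA d').snd = (dartB d).fst) ↔ (d'.snd = d.fst) := by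
    simp [dartA, dartB]
  by_cases h1 : d' = d.symm
  · simp only [groverMatrix]
    rw [if_pos (hsym.mpr h1), if_pos h1,
      show ((dartA d').snd) = Sum.inl d'.snd from rfl, degree_inl]
  · by_cases h2 : d'.snd = d.fst
    · simp only [groverMatrix]
      rw [if_neg (fun hc => h1 (hsym.mp hc)), if_pos (hsnd.mpr h2), if_neg h1, if_pos h2,
        show ((dartA d').snd) = Sum.inl d'.snd from rfl, degree_inl]
    · simp only [groverMatrix]
      rw [if_neg (fun hc => h1 (hsym.mp hc)), if_neg (fun hc => h2 (hsnd.mp hc)),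
        if_neg h1, if_neg h2]

lemma grover_sub_eq :
    groverMatrix (subdivisionGraph G) =
      (reindexAlgEquiv ℂ ℂ (subDartEquiv (G := G)))
        (Matrix.fromBlocks 0 1 (groverMatrix G) 0) := by
  funext a b
  rw [reindexAlgEquiv_apply, reindex_apply, submatrix_apply]
  obtain ⟨x, rfl⟩ := (subDartEquiv (G := G)).surjective a
  obtain ⟨y, rfl⟩ := (subDartEquiv (G := G)).surjective b
  rw [Equiv.symm_apply_apply, Equiv.symm_apply_apply]
  rcases x with d | d <;> rcases y with d' | d'
  · show groverMatrix (subdivisionGraph G) (dartA d) (dartA d') =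
      Matrix.fromBlocks 0 1 (groverMatrix G) 0 (Sum.inl d) (Sum.inl d')
    rw [entryAA]
    simp
  · show groverMatrix (subdivisionGraph G) (dartA d) (dartB d') =
      Matrix.fromBlocks 0 1 (groverMatrix G) 0 (Sum.inl d) (Sum.inr d')
    rw [entryAB]
    simp [Matrix.one_apply, eq_comm]
  · show groverMatrix (subdivisionGraph G) (dartB d) (dartA d') =
      Matrix.fromBlocks 0 1 (groverMatrix G) 0 (Sum.inr d) (Sum.inl d')
    rw [entryBA]
    simp
  · show groverMatrix (subdivisionGraph G) (dartB d) (dartB d') =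
      Matrix.fromBlocks 0 1 (groverMatrix G) 0 (Sum.inr d) (Sum.inr d')
    rw [entryBB]
    simp

lemma block_pow_even {ι : Type*} [Fintype ι] [DecidableEq ι] (A : Matrix ι ι ℂ) (i : ℕ) :
    (Matrix.fromBlocks 0 1 A 0) ^ (2 * i) = Matrix.fromBlocks (A ^ i) 0 0 (A ^ i) := by
  induction i with
  | zero => simp [Matrix.fromBlocks_one]
  | succ n ih =>
    rw [show 2 * (n + 1) = 2 * n + 1 + 1 by ring, pow_succ, pow_succ, ih,
      Matrix.fromBlocks_multiply, Matrix.fromBlocks_multiply]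
    simp [pow_succ]

lemma block_pow_odd {ι : Type*} [Fintype ι] [DecidableEq ι] (A : Matrix ι ι ℂ) (i : ℕ) :
    (Matrix.fromBlocks 0 1 A 0) ^ (2 * i + 1) =
      Matrix.fromBlocks 0 (A ^ i) (A ^ (i + 1)) 0 := by
  rw [pow_succ, block_pow_even, Matrix.fromBlocks_multiply]
  simp [pow_succ]

end SubdivisionAux

/-- **Proposition 5.2.** If `G` induces a `k`-periodic Grover walk, then
its subdivision graph `S(G)` induces a `2k`-periodic Grover walk. -/
theorem subdivision_periodic {V : Type*} [Fintype V] [DecidableEq V]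
    (G : SimpleGraph V) [DecidableRel G.Adj] (hG : G.Connected)
    (hne : G.edgeSet.Nonempty) (k : ℕ) (hk : 0 < k)
    (h : InducesPeriodicGroverWalk G k) :
    InducesPeriodicGroverWalk (subdivisionGraph G) (2 * k) := by
  obtain ⟨hUk, hmin⟩ := h
  have key : ∀ n : ℕ, groverMatrix (subdivisionGraph G) ^ n =
      (reindexAlgEquiv ℂ ℂ (SubdivisionAux.subDartEquiv (G := G)))
        ((Matrix.fromBlocks 0 1 (groverMatrix G) 0) ^ n) := fun n => by
    rw [SubdivisionAux.grover_sub_eq, ← map_pow]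
  have hdart : Nonempty G.Dart := by
    obtain ⟨e, he⟩ := hne
    revert he
    refine Sym2.ind (fun x y he => ?_) e
    exact ⟨⟨(x, y), G.mem_edgeSet.mp he⟩⟩
  constructor
  · rw [key, SubdivisionAux.block_pow_even, hUk, Matrix.fromBlocks_one]
    exact _root_.map_one _
  · intro j hj1 hj2 hcon
    rw [key] at hcon
    have hM : (Matrix.fromBlocks 0 1 (groverMatrix G) 0 :
        Matrix (G.Dart ⊕ G.Dart) (G.Dart ⊕ G.Dart) ℂ) ^ j = 1 :=
      (reindexAlgEquiv ℂ ℂ _).injective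
        (hcon.trans (_root_.map_one (reindexAlgEquiv ℂ ℂ
          (SubdivisionAux.subDartEquiv (G := G)))).symm)
    rcases Nat.even_or_odd j with ⟨i, hi⟩ | ⟨i, hi⟩
    · rw [show j = 2 * i by omega, SubdivisionAux.block_pow_even] at hM
      have hUi : groverMatrix G ^ i = 1 := by
        have h11 := congrArg Matrix.toBlocks₁₁ hM
        rwa [Matrix.toBlocks_fromBlocks₁₁, ← Matrix.fromBlocks_one,
          Matrix.toBlocks_fromBlocks₁₁] at h11
      exact hmin i (by omega) (by omega) hUi
    · rw [show j = 2 * i + 1 by omega, SubdivisionAux.block_pow_odd] at hM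
      have h11 := congrArg Matrix.toBlocks₁₁ hM
      rw [Matrix.toBlocks_fromBlocks₁₁, ← Matrix.fromBlocks_one,
        Matrix.toBlocks_fromBlocks₁₁] at h11
      obtain ⟨d⟩ := hdart
      have := congrFun (congrFun h11 d) d
      simp [Matrix.one_apply] at this
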